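/- Let A be an N×N matrix with nonnegative integer entries such that A(1,1) = 2, A(i,i) ≥ 2 for all i, and A(i,j) = 1 for i ≠ j. Set d_i = A(i,i) − 2 and let r = |{i | d_i = 0}| − 1. Then the Bowen-Franks group ℤ^N/(I − Aᵗ)ℤ^N is isomorphic as an abelian group to ℤ^r ⊕ ⨁_{i : d_i ≥ 2} ℤ/d_iℤ. -/

import Mathlib

open Matrix

section Aux

noncomputable def aePiSplit {ι : Type*} (p : ι → Prop) [DecidablePred p] (π : ι → Type*)
    [∀ i, AddCommGroup (π i)] :
    (∀ i, π i) ≃+ (∀ i : {x // p x}, π i) × (∀ i : {x // ¬ p x}, π i) :=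
  { Equiv.piEquivPiSubtypeProd p π with map_add' := fun _ _ => rfl }

noncomputable def aeArrow {α β M : Type*} [AddCommGroup M] (e : α ≃ β) :
    (α → M) ≃+ (β → M) :=
  { Equiv.arrowCongr e (Equiv.refl M) with map_add' := fun _ _ => rfl }

def zmodCongr {m n : ℕ} (h : m = n) : ZMod m ≃+ ZMod n := by
  subst h; exact AddEquiv.refl _

end Aux

set_option maxHeartbeats 1600000 in
theorem stmt14 {N : ℕ} (hN : 0 < N) (A : Matrix (Fin N) (Fin N) ℤ)
    (hpos : ∀ i j, 0 ≤ A i j)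
    (h11 : A ⟨0, hN⟩ ⟨0, hN⟩ = 2)
    (hdiag : ∀ i, 2 ≤ A i i)
    (hoff : ∀ i j, i ≠ j → A i j = 1)
    (d : Fin N → ℤ) (hd : ∀ i, d i = A i i - 2)
    (r : ℕ) (hr : r = (Finset.univ.filter fun i => d i = 0).card - 1) :
    Nonempty (((Fin N → ℤ) ⧸ LinearMap.range (Matrix.toLin' (1 - Aᵀ))) ≃+
      ((Fin r → ℤ) × ((i : {i : Fin N // 2 ≤ d i}) → ZMod (d i.1).toNat))) := by
  classical
  set z : Fin N := ⟨0, hN⟩ with hz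
  have hd0 : d z = 0 := by rw [hd, h11]; ring
  have hdnn : ∀ i, 0 ≤ d i := fun i => by have := hdiag i; rw [hd]; omega
  set d' : Fin N → ℤ := fun j => if j = z then 1 else d j with hd'
  -- the generating vectors
  set c : Fin N → (Fin N → ℤ) := fun j i => 1 + (if i = j then d j else 0) with hc
  set c' : Fin N → (Fin N → ℤ) :=
    fun j => if j = z then (fun _ => 1) else (fun i => if i = j then d j else 0) with hc'
  set b : Fin N → (Fin N → ℤ) := fun j i => if i = j then d' j else 0 with hb
  -- Step 1: the range is the span of the vectors c j
  have hcol : ∀ j, (1 - Aᵀ)ᵀ j = -(c j) := by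
    intro j; funext i
    simp only [transpose_apply, Matrix.sub_apply, one_apply, hc, Pi.neg_apply]
    by_cases hij : i = j
    · subst hij; have := hd i; simp; omega
    · rw [if_neg hij, if_neg hij, hoff j i (fun h => hij h.symm)]; ring
  have hrange : LinearMap.range (Matrix.toLin' (1 - Aᵀ)) = Submodule.span ℤ (Set.range c) := by
    rw [Matrix.range_toLin']
    apply le_antisymm
    · rw [Submodule.span_le]; rintro _ ⟨j, rfl⟩
      rw [show (1 - Aᵀ).col j = (1 - Aᵀ)ᵀ j from rfl, hcol j]
      exact neg_mem (Submodule.subset_span ⟨j, rfl⟩)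
    · rw [Submodule.span_le]; rintro _ ⟨j, rfl⟩
      have : c j = -((1 - Aᵀ)ᵀ j) := by rw [hcol j, neg_neg]
      rw [this]
      exact neg_mem (Submodule.subset_span ⟨j, rfl⟩)
  -- Step 1b: span c = span c'
  have hcz : c z = c' z := by
    funext i; simp only [hc, hc', if_pos rfl]
    by_cases hiz : i = z
    · rw [if_pos hiz, hd0]; ring
    · rw [if_neg hiz]; ring
  have hcj : ∀ j, j ≠ z → c j = c' z + c' j := by
    intro j hj; funext i
    simp only [hc, hc', if_pos rfl, if_neg hj, Pi.add_apply]
  have hspan1 : Submodule.span ℤ (Set.range c) = Submodule.span ℤ (Set.range c') := by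
    apply le_antisymm <;> rw [Submodule.span_le] <;> rintro _ ⟨j, rfl⟩
    · by_cases hj : j = z
      · subst hj; rw [hcz]; exact Submodule.subset_span ⟨z, rfl⟩
      · rw [hcj j hj]
        exact add_mem (Submodule.subset_span ⟨z, rfl⟩) (Submodule.subset_span ⟨j, rfl⟩)
    · by_cases hj : j = z
      · subst hj; rw [← hcz]; exact Submodule.subset_span ⟨z, rfl⟩
      · have : c' j = c j - c' z := by rw [hcj j hj]; ring
        rw [this, ← hcz]
        exact sub_mem (Submodule.subset_span ⟨j, rfl⟩) (Submodule.subset_span ⟨z, rfl⟩)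
  -- Step 2: linear automorphism moving span c' to span b
  set F : (Fin N → ℤ) →ₗ[ℤ] (Fin N → ℤ) :=
    { toFun := fun x i => x i - (if i = z then 0 else x z)
      map_add' := fun x y => by funext i; by_cases hiz : i = z <;> simp [hiz] <;> ring
      map_smul' := fun m x => by funext i; by_cases hiz : i = z <;> simp [hiz] <;> ring } with hF
  set G : (Fin N → ℤ) →ₗ[ℤ] (Fin N → ℤ) :=
    { toFun := fun x i => x i + (if i = z then 0 else x z)
      map_add' := fun x y => by funext i; by_cases hiz : i = z <;> simp [hiz] <;> ring
      map_smul' := fun m x => by funext i; by_cases hiz : i = z <;> simp [hiz] <;> ring } with hG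
  have hGz : ∀ x : Fin N → ℤ, (G x) z = x z := by intro x; simp [hG]
  have hFz : ∀ x : Fin N → ℤ, (F x) z = x z := by intro x; simp [hF]
  set T : (Fin N → ℤ) ≃ₗ[ℤ] (Fin N → ℤ) := LinearEquiv.ofLinear F G
    (by ext x i; by_cases hiz : i = z
        · simp [hF, hG, hiz]
        · simp only [LinearMap.coe_comp, Function.comp_apply, LinearMap.id_coe, id_eq]
          rw [hF]; simp only [LinearMap.coe_mk, AddHom.coe_mk]
          rw [if_neg hiz, hGz, hG]; simp only [LinearMap.coe_mk, AddHom.coe_mk]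
          rw [if_neg hiz]; ring)
    (by ext x i; by_cases hiz : i = z
        · simp [hF, hG, hiz]
        · simp only [LinearMap.coe_comp, Function.comp_apply, LinearMap.id_coe, id_eq]
          rw [hG]; simp only [LinearMap.coe_mk, AddHom.coe_mk]
          rw [if_neg hiz, hFz, hF]; simp only [LinearMap.coe_mk, AddHom.coe_mk]
          rw [if_neg hiz]; ring) with hT
  have hTc' : ∀ j, T (c' j) = b j := by
    intro j; funext i
    have hTF : T (c' j) = F (c' j) := rfl
    rw [hTF, hF]; simp only [LinearMap.coe_mk, AddHom.coe_mk]
    by_cases hj : j = z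
    · subst hj
      simp only [hc', hb, if_pos rfl, hd']
      by_cases hiz : i = z <;> simp [hiz]
    · have hzj : z ≠ j := fun h => hj h.symm
      simp only [hc', hb, if_neg hj, hd']
      by_cases hiz : i = z
      · subst hiz; simp [hzj]
      · simp [hiz, hzj]
  have hmap : (Submodule.span ℤ (Set.range c')).map (T : (Fin N → ℤ) →ₗ[ℤ] (Fin N → ℤ))
      = Submodule.span ℤ (Set.range b) := by
    rw [Submodule.map_span]
    congr 1
    rw [← Set.range_comp]
    exact congrArg Set.range (funext fun j => hTc' j)
  -- Step 3: span b = pi of principal ideals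
  set P : Fin N → Submodule ℤ ℤ := fun j => Ideal.span {d' j} with hP
  have hspan2 : Submodule.span ℤ (Set.range b) = Submodule.pi Set.univ P := by
    apply le_antisymm
    · rw [Submodule.span_le]; rintro _ ⟨j, rfl⟩
      intro i _
      show b j i ∈ P i
      by_cases hij : i = j
      · subst hij
        simp only [hb, if_pos rfl, hP]
        exact Ideal.mem_span_singleton_self _
      · simp only [hb, if_neg hij]
        exact zero_mem _
    · intro x hx
      have hx' : ∀ i, ∃ e : ℤ, e * d' i = x i := by
        intro i
        have h := hx i (Set.mem_univ i)
        rw [hP] at h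
        rwa [SetLike.mem_coe, Ideal.mem_span_singleton'] at h
      choose e he using hx'
      have hxe : x = ∑ j, e j • b j := by
        funext i
        rw [Finset.sum_apply]
        have : ∀ j, (e j • b j) i = if i = j then e j * d' j else 0 := by
          intro j
          simp only [Pi.smul_apply, hb, smul_eq_mul, mul_ite, mul_zero]
        simp only [this]
        rw [Finset.sum_ite_eq (Finset.univ) i (fun j => e j * d' j)]
        rw [if_pos (Finset.mem_univ i), he i]
      rw [hxe]
      exact Submodule.sum_mem _ fun j _ =>
        Submodule.smul_mem _ _ (Submodule.subset_span ⟨j, rfl⟩)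
  -- Assemble the linear part
  have E : ((Fin N → ℤ) ⧸ LinearMap.range (Matrix.toLin' (1 - Aᵀ))) ≃ₗ[ℤ]
      (∀ j, ℤ ⧸ P j) :=
    ((Submodule.quotEquivOfEq _ _ (hrange.trans hspan1)).trans
      ((Submodule.Quotient.equiv _ _ T hmap).trans
        (Submodule.quotEquivOfEq _ _ hspan2))).trans (Submodule.quotientPi P)
  -- trivial quotients
  have hall : ∀ j : Fin N, d' j = 1 → ∀ x : ℤ ⧸ P j, x = 0 := by
    intro j hj x
    obtain ⟨y, rfl⟩ := Submodule.Quotient.mk_surjective _ x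
    rw [Submodule.Quotient.mk_eq_zero, hP]
    show y ∈ Ideal.span {d' j}
    rw [hj, Ideal.span_singleton_one]
    trivial
  -- the ZMod part
  have eA : (∀ i : {i : Fin N // 2 ≤ d i}, ℤ ⧸ P i.1) ≃+
      ((i : {i : Fin N // 2 ≤ d i}) → ZMod (d i.1).toNat) := by
    refine AddEquiv.piCongrRight fun i => ?_
    have hiz : i.1 ≠ z := by
      intro h
      have := i.2
      rw [h, hd0] at this
      omega
    have h1 : P i.1 = (Ideal.span {d i.1} : Submodule ℤ ℤ) := by
      rw [hP]
      show Ideal.span {d' i.1} = _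
      rw [hd']
      simp only [if_neg hiz]
    exact ((Submodule.quotEquivOfEq _ _ h1).toAddEquiv.trans
      (Int.quotientSpanEquivZMod (d i.1)).toAddEquiv).trans
      (zmodCongr (by have := hdnn i.1; omega))
  -- the free part plus trivial part
  haveI hU : ∀ j : {j : {j : Fin N // ¬ 2 ≤ d j} // ¬ d' j.1 = 0},
      Unique (ℤ ⧸ P j.1.1) := by
    intro j
    have h1 : d' j.1.1 = 1 := by
      obtain ⟨⟨i, hi⟩, hj0⟩ := j
      simp only [hd'] at hj0 ⊢
      by_cases hiz : i = z
      · simp [hiz]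
      · simp only [if_neg hiz] at hj0 ⊢
        have := hdnn i
        omega
    exact ⟨⟨0⟩, fun a => (hall _ h1 a).trans (hall _ h1 _).symm⟩
  have himp : ∀ x : Fin N, d' x = 0 → ¬ 2 ≤ d x := by
    intro x hx
    simp only [hd'] at hx
    by_cases hxz : x = z
    · rw [if_pos hxz] at hx; omega
    · rw [if_neg hxz] at hx; omega
  have hcard : Fintype.card {j : {j : Fin N // ¬ 2 ≤ d j} // d' j.1 = 0} = r := by
    rw [Fintype.card_congr (Equiv.subtypeSubtypeEquivSubtype
      (p := fun j : Fin N => ¬ 2 ≤ d j) (q := fun j : Fin N => d' j = 0)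
      (fun {x} hx => himp x hx))]
    rw [Fintype.card_subtype]
    have hfilter : (Finset.univ.filter fun j => d' j = 0) =
        (Finset.univ.filter fun j => d j = 0).erase z := by
      ext j
      simp only [Finset.mem_filter, Finset.mem_erase, Finset.mem_univ, true_and, hd']
      constructor
      · intro h
        by_cases hjz : j = z
        · rw [if_pos hjz] at h; omega
        · rw [if_neg hjz] at h; exact ⟨hjz, h⟩
      · rintro ⟨hjz, h⟩
        rw [if_neg hjz]; exact h
    rw [hfilter, Finset.card_erase_of_mem, hr]
    rw [Finset.mem_filter]
    exact ⟨Finset.mem_univ z, hd0⟩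
  have eBot : ∀ j : {j : {j : Fin N // ¬ 2 ≤ d j} // d' j.1 = 0},
      (ℤ ⧸ P j.1.1) ≃+ ℤ := by
    intro j
    refine (Submodule.quotEquivOfEqBot _ ?_).toAddEquiv
    rw [hP]
    show Ideal.span {d' j.1.1} = ⊥
    rw [j.2]
    exact Ideal.span_singleton_eq_bot.mpr rfl
  have eFree : (∀ j : {j : {j : Fin N // ¬ 2 ≤ d j} // d' j.1 = 0}, ℤ ⧸ P j.1.1) ≃+
      (Fin r → ℤ) :=
    (AddEquiv.piCongrRight eBot).trans (aeArrow (Fintype.equivFinOfCardEq hcard))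
  have e2 : (∀ j : Fin N, ℤ ⧸ P j) ≃+
      (∀ i : {i : Fin N // 2 ≤ d i}, ℤ ⧸ P i.1) ×
      (∀ j : {j : Fin N // ¬ 2 ≤ d j}, ℤ ⧸ P j.1) :=
    aePiSplit (fun j => 2 ≤ d j) (fun j => ℤ ⧸ P j)
  have e3 : (∀ j : {j : Fin N // ¬ 2 ≤ d j}, ℤ ⧸ P j.1) ≃+
      (∀ j : {j : {j : Fin N // ¬ 2 ≤ d j} // d' j.1 = 0}, ℤ ⧸ P j.1.1) ×
      (∀ j : {j : {j : Fin N // ¬ 2 ≤ d j} // ¬ d' j.1 = 0}, ℤ ⧸ P j.1.1) :=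
    aePiSplit (fun j : {j : Fin N // ¬ 2 ≤ d j} => d' j.1 = 0) (fun j => ℤ ⧸ P j.1)
  have e4 : (∀ j : {j : {j : Fin N // ¬ 2 ≤ d j} // d' j.1 = 0}, ℤ ⧸ P j.1.1) ×
      (∀ j : {j : {j : Fin N // ¬ 2 ≤ d j} // ¬ d' j.1 = 0}, ℤ ⧸ P j.1.1) ≃+
      (∀ j : {j : {j : Fin N // ¬ 2 ≤ d j} // d' j.1 = 0}, ℤ ⧸ P j.1.1) :=
    AddEquiv.prodUnique
  have e5 : (∀ j : {j : Fin N // ¬ 2 ≤ d j}, ℤ ⧸ P j.1) ≃+ (Fin r → ℤ) :=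
    e3.trans (e4.trans eFree)
  exact ⟨E.toAddEquiv.trans (e2.trans ((AddEquiv.prodCongr eA e5).trans AddEquiv.prodComm))⟩
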